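/- For every infinite cardinal κ, every subspace X of a κ-bounded Urysohn topological space Y is strongly κ̄-regular. -/
import Mathlib


universe u

open Cardinal Set Topology

/-- `X` is `𝓕`-regular: any `F ∈ 𝓕` and point `x ∉ F` can be separated by disjoint open sets. -/
def FRegular (X : Type u) [TopologicalSpace X] (F : Set (Set X)) : Prop :=
  ∀ A ∈ F, ∀ x : X, x ∉ A → ∃ U V : Set X,
    IsOpen U ∧ IsOpen V ∧ A ⊆ U ∧ x ∈ V ∧ Disjoint U V

/-- `X` is strongly `𝓕`-regular: any `F ∈ 𝓕` and point `x ∉ F` can be separated by open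
sets with disjoint closures. -/
def StronglyFRegular (X : Type u) [TopologicalSpace X] (F : Set (Set X)) : Prop :=
  ∀ A ∈ F, ∀ x : X, x ∉ A → ∃ U V : Set X,
    IsOpen U ∧ IsOpen V ∧ A ⊆ U ∧ x ∈ V ∧ closure U ∩ closure V = ∅

/-- `X` is `𝓕`-normal: any two disjoint members of `𝓕` can be separated by disjoint open sets. -/
def FNormal (X : Type u) [TopologicalSpace X] (F : Set (Set X)) : Prop :=
  ∀ A ∈ F, ∀ B ∈ F, Disjoint A B → ∃ U V : Set X,
    IsOpen U ∧ IsOpen V ∧ A ⊆ U ∧ B ⊆ V ∧ Disjoint U V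

/-- `X` is strongly `𝓕`-normal: any two disjoint members of `𝓕` can be separated by
open sets with disjoint closures. -/
def StronglyFNormal (X : Type u) [TopologicalSpace X] (F : Set (Set X)) : Prop :=
  ∀ A ∈ F, ∀ B ∈ F, Disjoint A B → ∃ U V : Set X,
    IsOpen U ∧ IsOpen V ∧ A ⊆ U ∧ B ⊆ V ∧ closure U ∩ closure V = ∅

/-- `X` is totally `𝓕`-normal: any member of `𝓕` and any closed set disjoint from it can be
separated by disjoint open sets. -/
def TotallyFNormal (X : Type u) [TopologicalSpace X] (F : Set (Set X)) : Prop :=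
  ∀ A ∈ F, ∀ B : Set X, IsClosed B → Disjoint A B → ∃ U V : Set X,
    IsOpen U ∧ IsOpen V ∧ A ⊆ U ∧ B ⊆ V ∧ Disjoint U V

/-- A topological space is `κ`-bounded if the closure of every subset of cardinality at most `κ`
is compact. -/
def KappaBounded (κ : Cardinal.{u}) (X : Type u) [TopologicalSpace X] : Prop :=
  ∀ S : Set X, #S ≤ κ → IsCompact (closure S)

/-- The family `𝓕_κ(X)` of all closed subsets of `X` contained in the closure of some subset
of `X` of cardinality at most `κ`. -/
def FamilyKappa (κ : Cardinal.{u}) (X : Type u) [TopologicalSpace X] : Set (Set X) :=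
  {F | IsClosed F ∧ ∃ C : Set X, #C ≤ κ ∧ F ⊆ closure C}

/-- A topological space is Urysohn if any two distinct points have open neighborhoods with
disjoint closures. -/
def UrysohnSpace (X : Type u) [TopologicalSpace X] : Prop :=
  ∀ x y : X, x ≠ y → ∃ U V : Set X,
    IsOpen U ∧ IsOpen V ∧ x ∈ U ∧ y ∈ V ∧ closure U ∩ closure V = ∅

lemma urysohn_sep {Y : Type u} [TopologicalSpace Y]
    (hu : ∀ x y : Y, x ≠ y → ∃ U V : Set Y,
      IsOpen U ∧ IsOpen V ∧ x ∈ U ∧ y ∈ V ∧ closure U ∩ closure V = ∅)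
    {F : Set Y} (hF : IsCompact F) {x : Y} (hx : x ∉ F) :
    ∃ U V : Set Y, IsOpen U ∧ IsOpen V ∧ F ⊆ U ∧ x ∈ V ∧ closure U ∩ closure V = ∅ := by
  have H : ∀ y ∈ F, ∃ p : Set Y × Set Y, IsOpen p.1 ∧ IsOpen p.2 ∧ y ∈ p.1 ∧ x ∈ p.2 ∧
      closure p.1 ∩ closure p.2 = ∅ := by
    intro y hy
    obtain ⟨U, V, h1, h2, h3, h4, h5⟩ := hu y x (fun h => hx (h ▸ hy))
    exact ⟨(U, V), h1, h2, h3, h4, h5⟩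
  choose! p hp1 hp2 hp3 hp4 hp5 using H
  obtain ⟨t, htF, ht⟩ := hF.elim_nhds_subcover (fun y => (p y).1)
    (fun y hy => ((hp1 y hy).mem_nhds (hp3 y hy)))
  refine ⟨⋃ y ∈ t, (p y).1, ⋂ y ∈ t, (p y).2, ?_, ?_, ht, ?_, ?_⟩
  · exact isOpen_biUnion fun y hy => hp1 y (htF y hy)
  · exact isOpen_biInter_finset fun y hy => hp2 y (htF y hy)
  · exact Set.mem_biInter fun y hy => hp4 y (htF y hy)
  · ext z
    simp only [Set.mem_inter_iff, Set.mem_empty_iff_false, iff_false]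
    rintro ⟨hzU, hzV⟩
    have hclosed : IsClosed (⋃ y ∈ t, closure (p y).1) :=
      Set.Finite.isClosed_biUnion (Finset.finite_toSet _) fun _ _ => isClosed_closure
    have hzU' : z ∈ ⋃ y ∈ t, closure (p y).1 :=
      closure_minimal (Set.iUnion₂_mono fun y hy => subset_closure) hclosed hzU
    obtain ⟨y, hy, hzy⟩ := Set.mem_iUnion₂.mp hzU'
    have hzV' : z ∈ closure (p y).2 :=
      closure_mono (Set.biInter_subset_of_mem hy) hzV
    have h5 := hp5 y (htF y hy)
    have : z ∈ closure (p y).1 ∩ closure (p y).2 := ⟨hzy, hzV'⟩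
    rw [h5] at this
    exact this

/-- Every subspace `X` of a `κ`-bounded Urysohn space `Y` is strongly `κ̄`-regular. -/
theorem stronglyFRegular_subspace_of_kappaBounded_urysohn {Y : Type u} [TopologicalSpace Y]
    (κ : Cardinal.{u}) (hκ : ℵ₀ ≤ κ) (hb : KappaBounded κ Y) (hu : UrysohnSpace Y) (X : Set Y) :
    StronglyFRegular X (FamilyKappa κ X) := by
  rintro A ⟨hAc, C, hC, hAC⟩ x hxA
  -- image of A in Y and its closure
  set A' : Set Y := Subtype.val '' A with hA'
  have hK : IsCompact (closure (Subtype.val '' C : Set Y)) :=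
    hb _ (le_trans Cardinal.mk_image_le hC)
  have hsub : A' ⊆ closure (Subtype.val '' C : Set Y) := by
    rintro _ ⟨a, ha, rfl⟩
    have := hAC ha
    rw [Topology.IsEmbedding.subtypeVal.closure_eq_preimage_closure_image] at this
    exact this
  have hFcomp : IsCompact (closure A') :=
    hK.of_isClosed_subset isClosed_closure
      (closure_minimal hsub isClosed_closure)
  have hxF : (x : Y) ∉ closure A' := by
    intro hmem
    apply hxA
    have : x ∈ closure A := by
      rw [Topology.IsEmbedding.subtypeVal.closure_eq_preimage_closure_image]
      exact hmem
    rwa [hAc.closure_eq] at this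
  obtain ⟨U, V, hU, hV, hFU, hxV, hUV⟩ := urysohn_sep hu hFcomp hxF
  refine ⟨Subtype.val ⁻¹' U, Subtype.val ⁻¹' V, hU.preimage continuous_subtype_val,
    hV.preimage continuous_subtype_val, ?_, hxV, ?_⟩
  · exact fun a ha => hFU (subset_closure ⟨a, ha, rfl⟩)
  · apply Set.eq_empty_of_subset_empty
    intro z hz
    have h1 : (z : Y) ∈ closure U :=
      continuous_subtype_val.closure_preimage_subset U hz.1
    have h2 : (z : Y) ∈ closure V :=
      continuous_subtype_val.closure_preimage_subset V hz.2
    have h3 : (z : Y) ∈ closure U ∩ closure V := ⟨h1, h2⟩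
    rw [hUV] at h3
    exact h3
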